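/- arXiv:2505.15967 — 3 statements merged into one kernel-verified Lean document; each statement's English description precedes it below -/
import Mathlib

section
/- Let 3/4 ≤ s₁ < 1 and s₁ < s₂ < 1, and let f : ℝ³ → ℂ belong to L¹(ℝ³) ∩ L²(ℝ³) with x ↦ ‖x‖·|f(x)| integrable on ℝ³. Then the function p ↦ 𝓕f(p)/(‖p‖^(2s₁) + ‖p‖^(2s₂)) belongs to L²(ℝ³) if and only if ∫_{ℝ³} f(x) dx = 0. -/
open MeasureTheory Metric Set
open scoped FourierTransform Real ENNReal

local notation "E3" => EuclideanSpace ℝ (Fin 3)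

/-- bound on the Fourier character minus one -/
lemma char_sub_one_bound (θ : ℝ) : ‖(Real.fourierChar θ : ℂ) - 1‖ ≤ 2 * π * |θ| := by
  have h1 : ∀ x ∈ (Set.univ : Set ℝ), HasDerivWithinAt (fun x : ℝ => (Real.fourierChar x : ℂ))
      (2 * π * Complex.I * Real.fourierChar x) Set.univ x :=
    fun x _ => (Real.hasDerivAt_fourierChar x).hasDerivWithinAt
  have h2 : ∀ x ∈ (Set.univ : Set ℝ),
      ‖(2 * (π:ℂ) * Complex.I * (Real.fourierChar x : ℂ))‖ ≤ 2 * π := by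
    intro x _
    simp [abs_of_nonneg Real.pi_nonneg, Circle.norm_coe]
  have h3 := Convex.norm_image_sub_le_of_norm_hasDerivWithin_le h1 h2 convex_univ
    (mem_univ (0:ℝ)) (mem_univ θ)
  simpa [AddChar.map_zero_eq_one, Real.norm_eq_abs] using h3

/-- Lipschitz-type bound for the Fourier integral near `0`. -/
lemma fourier_sub_integral_bound (f : E3 → ℂ) (hf1 : Integrable f)
    (hxf : Integrable (fun x : E3 => ‖x‖ * ‖f x‖)) (p : E3) :
    ‖𝓕 f p - ∫ x, f x‖ ≤ 2 * π * (∫ x : E3, ‖x‖ * ‖f x‖) * ‖p‖ := by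
  have hint : Integrable (fun v : E3 => Real.fourierChar (-(inner ℝ v p : ℝ)) • f v) :=
    (Real.fourierIntegral_convergent_iff p).2 hf1
  rw [Real.fourier_eq, ← integral_sub hint hf1]
  have hbound : ∀ v : E3, ‖Real.fourierChar (-(inner ℝ v p : ℝ)) • f v - f v‖
      ≤ 2 * π * ‖p‖ * (‖v‖ * ‖f v‖) := by
    intro v
    have : Real.fourierChar (-(inner ℝ v p : ℝ)) • f v - f v
        = ((Real.fourierChar (-(inner ℝ v p : ℝ)) : ℂ) - 1) * f v := by
      rw [Circle.smul_def, smul_eq_mul]; ring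
    rw [this, norm_mul]
    have h1 : ‖(Real.fourierChar (-(inner ℝ v p : ℝ)) : ℂ) - 1‖ ≤ 2 * π * |(inner ℝ v p : ℝ)| := by
      simpa [abs_neg] using char_sub_one_bound (-(inner ℝ v p : ℝ))
    have h2 : |(inner ℝ v p : ℝ)| ≤ ‖v‖ * ‖p‖ := abs_real_inner_le_norm v p
    calc ‖(Real.fourierChar (-(inner ℝ v p : ℝ)) : ℂ) - 1‖ * ‖f v‖
        ≤ (2 * π * (‖v‖ * ‖p‖)) * ‖f v‖ := by
          apply mul_le_mul_of_nonneg_right _ (norm_nonneg _)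
          exact h1.trans (by nlinarith [Real.pi_pos, norm_nonneg (f v)])
      _ = 2 * π * ‖p‖ * (‖v‖ * ‖f v‖) := by ring
  calc ‖∫ v, (Real.fourierChar (-(inner ℝ v p : ℝ)) • f v - f v)‖
      ≤ ∫ v, ‖Real.fourierChar (-(inner ℝ v p : ℝ)) • f v - f v‖ :=
        norm_integral_le_integral_norm _
    _ ≤ ∫ v : E3, 2 * π * ‖p‖ * (‖v‖ * ‖f v‖) := by
        apply integral_mono_of_nonneg (Filter.Eventually.of_forall fun v => norm_nonneg _)
          (hxf.const_mul _) (Filter.Eventually.of_forall hbound)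
    _ = 2 * π * (∫ x : E3, ‖x‖ * ‖f x‖) * ‖p‖ := by
        rw [MeasureTheory.integral_const_mul]; ring

lemma fourier_at_zero (f : E3 → ℂ) : 𝓕 f 0 = ∫ x, f x := by
  rw [Real.fourier_eq]
  simp

lemma half_pow_anti {n m : ℕ} (h : n ≤ m) : (1/2:ℝ)^m ≤ (1/2)^n :=
  pow_le_pow_of_le_one (by norm_num) (by norm_num) h

lemma annuli_cover {ε : ℝ} (hε : 0 < ε) :
    (⋃ n : ℕ, (ball (0:E3) (ε * (1/2)^n) \ ball (0:E3) (ε * (1/2)^(n+1))))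
      = ball (0:E3) ε \ {0} := by
  ext p
  simp only [mem_iUnion, mem_diff, mem_ball_zero_iff, mem_singleton_iff]
  constructor
  · rintro ⟨n, h1, h2⟩
    rw [not_lt] at h2
    refine ⟨lt_of_lt_of_le h1 ?_, ?_⟩
    · calc ε * (1/2:ℝ)^n ≤ ε * 1 := by
            have := half_pow_anti (Nat.zero_le n)
            nlinarith
        _ = ε := mul_one ε
    · intro h0
      rw [h0, norm_zero] at h2
      have : (0:ℝ) < ε * (1/2)^(n+1) := by positivity
      linarith
  · rintro ⟨h1, h2⟩
    have hp0 : 0 < ‖p‖ := norm_pos_iff.2 h2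
    have hex : ∃ n : ℕ, ε * (1/2)^(n+1) ≤ ‖p‖ := by
      obtain ⟨n, hn⟩ := exists_pow_lt_of_lt_one (show (0:ℝ) < ‖p‖/ε by positivity)
        (show (1/2:ℝ) < 1 by norm_num)
      refine ⟨n, ?_⟩
      rw [lt_div_iff₀ hε] at hn
      have h4 : ε * (1/2:ℝ)^(n+1) ≤ ε * (1/2)^n := by
        have := half_pow_anti (show n ≤ n+1 by omega); nlinarith
      nlinarith
    classical
    refine ⟨Nat.find hex, ?_, not_lt.2 (Nat.find_spec hex)⟩
    rcases Nat.eq_zero_or_pos (Nat.find hex) with hm | hm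
    · rw [hm]; simpa using h1
    · obtain ⟨k, hk⟩ := Nat.exists_eq_add_of_lt hm
      have hmin := not_le.1 (Nat.find_min hex (m := k) (by omega) : ¬ _)
      have he : ε * (1/2:ℝ)^(k+1) = ε * (1/2)^(Nat.find hex) := by
        rw [hk]; ring_nf
      linarith [he ▸ hmin]

lemma annuli_disjoint (ε : ℝ) :
    Pairwise (Function.onFun Disjoint
      (fun n : ℕ => ball (0:E3) (ε * (1/2)^n) \ ball (0:E3) (ε * (1/2)^(n+1)))) := by
  have key : ∀ n m : ℕ, n < m → Disjoint
      (ball (0:E3) (ε * (1/2)^n) \ ball (0:E3) (ε * (1/2)^(n+1)))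
      (ball (0:E3) (ε * (1/2)^m) \ ball (0:E3) (ε * (1/2)^(m+1))) := by
    intro n m hnm
    rw [Set.disjoint_left]
    rintro p ⟨hp1, hp2⟩ ⟨hq1, hq2⟩
    rw [mem_ball_zero_iff] at hp1 hq1
    simp only [mem_ball_zero_iff, not_lt] at hp2 hq2
    have hε : 0 ≤ ε := by
      by_contra h
      have h3 : ε * (1/2:ℝ)^n < 0 := by
        have : (0:ℝ) < (1/2:ℝ)^n := by positivity
        nlinarith
      linarith [norm_nonneg p]
    have := half_pow_anti (show n+1 ≤ m by omega)
    nlinarith [norm_nonneg p]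
  intro n m hnm
  rcases lt_or_gt_of_ne hnm with h | h
  · exact key n m h
  · exact (key m n h).symm

lemma vol_ball_E3 {r : ℝ} (hr : 0 ≤ r) :
    volume (ball (0:E3) r) = ENNReal.ofReal (r^3) * volume (ball (0:E3) 1) := by
  rw [Measure.addHaar_ball volume (0:E3) hr, finrank_euclideanSpace_fin]



/-- measure of the annulus -/
lemma vol_annulus {ε : ℝ} (hε : 0 < ε) (n : ℕ) :
    volume (ball (0:E3) (ε * (1/2)^n) \ ball (0:E3) (ε * (1/2)^(n+1)))
      = ENNReal.ofReal ((7/8) * (ε * (1/2)^n)^3) * volume (ball (0:E3) 1) := by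
  have hsub : ball (0:E3) (ε * (1/2)^(n+1)) ⊆ ball (0:E3) (ε * (1/2)^n) := by
    apply ball_subset_ball
    have := half_pow_anti (show n ≤ n+1 by omega)
    nlinarith
  rw [measure_diff hsub measurableSet_ball.nullMeasurableSet measure_ball_lt_top.ne,
    vol_ball_E3 (r := ε * (1/2)^n) (by positivity),
    vol_ball_E3 (r := ε * (1/2)^(n+1)) (by positivity),
    ← ENNReal.sub_mul (fun _ _ => measure_ball_lt_top.ne),
    ← ENNReal.ofReal_sub _ (by positivity)]
  congr 2
  ring

/-- divergence of the integral of `C‖p‖^(-a)` near `0` when `a ≥ 3` -/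
lemma lintegral_rpow_ball_top {a ε C : ℝ} (ha : 3 ≤ a) (hε : 0 < ε) (hε1 : ε ≤ 1)
    (hC : 0 < C) :
    ∫⁻ p in ball (0:E3) ε, ENNReal.ofReal (C * ‖p‖ ^ (-a)) = ∞ := by
  set v := volume (ball (0:E3) 1) with hv
  have hv0 : v ≠ 0 := (measure_ball_pos _ _ one_pos).ne'
  have hvtop : v ≠ ∞ := measure_ball_lt_top.ne
  set A : ℕ → Set E3 := fun n =>
    ball (0:E3) (ε * (1/2)^n) \ ball (0:E3) (ε * (1/2)^(n+1)) with hA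
  have hmeas : ∀ n, MeasurableSet (A n) := fun n =>
    measurableSet_ball.diff measurableSet_ball
  have hrpos : ∀ n : ℕ, (0:ℝ) < ε * (1/2)^n := fun n => by positivity
  have hrle1 : ∀ n : ℕ, ε * (1/2:ℝ)^n ≤ 1 := fun n => by
    have := half_pow_anti (Nat.zero_le n); nlinarith
  have key : ∀ n, ENNReal.ofReal ((7/8) * C) * v
      ≤ ∫⁻ p in A n, ENNReal.ofReal (C * ‖p‖ ^ (-a)) := by
    intro n
    set r : ℝ := ε * (1/2)^n with hr
    have hrp : 0 < r := hrpos n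
    calc ENNReal.ofReal ((7/8) * C) * v
        ≤ ENNReal.ofReal (C * r ^ (-a) * ((7/8) * r^3)) * v := by
          refine mul_le_mul_left (ENNReal.ofReal_le_ofReal ?_) v
          have h1 : r ^ (-a) * r ^ (3:ℕ) = r ^ (3 - a) := by
            rw [← Real.rpow_natCast r 3, ← Real.rpow_add hrp]; norm_num; ring_nf
          have h2 : (1:ℝ) ≤ r ^ (3 - a) :=
            Real.one_le_rpow_of_pos_of_le_one_of_nonpos hrp (hrle1 n) (by linarith)
          nlinarith [Real.rpow_nonneg hrp.le (-a),
            mul_le_mul_of_nonneg_left h2 (le_of_lt hC)]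
      _ = ENNReal.ofReal (C * r ^ (-a)) * volume (A n) := by
          have hvol : volume (A n)
              = ENNReal.ofReal ((7/8) * r^3) * v := vol_annulus hε n
          rw [hvol, ENNReal.ofReal_mul (by positivity : (0:ℝ) ≤ C * r ^ (-a)), mul_assoc]
      _ = ∫⁻ _ in A n, ENNReal.ofReal (C * r ^ (-a)) := (setLIntegral_const _ _).symm
      _ ≤ ∫⁻ p in A n, ENNReal.ofReal (C * ‖p‖ ^ (-a)) := by
          apply setLIntegral_mono (by fun_prop)
          intro p hp
          apply ENNReal.ofReal_le_ofReal
          have hp1 : ‖p‖ < r := by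
            have := hp.1; rwa [mem_ball_zero_iff] at this
          have hp0 : 0 < ‖p‖ := by
            have h2 := hp.2
            rw [mem_ball_zero_iff, not_lt] at h2
            calc (0:ℝ) < ε * (1/2)^(n+1) := hrpos (n+1)
              _ ≤ ‖p‖ := h2
          have := Real.rpow_le_rpow_of_nonpos hp0 hp1.le (by linarith : -a ≤ 0)
          nlinarith
  have htop : (⊤ : ℝ≥0∞) ≤ ∫⁻ p in ball (0:E3) ε, ENNReal.ofReal (C * ‖p‖ ^ (-a)) := by
    calc (⊤ : ℝ≥0∞) = ∑' _ : ℕ, ENNReal.ofReal ((7/8) * C) * v :=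
          (ENNReal.tsum_const_eq_top_of_ne_zero
            (mul_ne_zero (ENNReal.ofReal_pos.2 (by positivity)).ne' hv0)).symm
      _ ≤ ∑' n : ℕ, ∫⁻ p in A n, ENNReal.ofReal (C * ‖p‖ ^ (-a)) :=
          ENNReal.tsum_le_tsum key
      _ = ∫⁻ p in ⋃ n, A n, ENNReal.ofReal (C * ‖p‖ ^ (-a)) :=
          (lintegral_iUnion hmeas (annuli_disjoint ε) _).symm
      _ ≤ ∫⁻ p in ball (0:E3) ε, ENNReal.ofReal (C * ‖p‖ ^ (-a)) := by
          apply lintegral_mono_set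
          rw [hA, annuli_cover hε]
          exact diff_subset
  exact top_le_iff.1 htop



lemma integrableOn_rpow_ball {t : ℝ} (ht : -3 < t) (ht0 : t ≤ 0) :
    IntegrableOn (fun p : E3 => ‖p‖ ^ t) (ball (0:E3) 1) := by
  have hmeasf : Measurable (fun p : E3 => ‖p‖ ^ t) := by fun_prop
  refine ⟨hmeasf.aestronglyMeasurable, ?_⟩
  rw [hasFiniteIntegral_iff_norm]
  have hnorm : ∀ p : E3, ENNReal.ofReal ‖‖p‖ ^ t‖ = ENNReal.ofReal (‖p‖ ^ t) := fun p => by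
    rw [Real.norm_eq_abs, abs_of_nonneg (Real.rpow_nonneg (norm_nonneg p) t)]
  simp_rw [hnorm]
  set v := volume (ball (0:E3) 1) with hv
  have hvtop : v ≠ ∞ := measure_ball_lt_top.ne
  set A : ℕ → Set E3 := fun n =>
    ball (0:E3) ((1:ℝ) * (1/2)^n) \ ball (0:E3) ((1:ℝ) * (1/2)^(n+1)) with hA
  have hmeas : ∀ n, MeasurableSet (A n) := fun n =>
    measurableSet_ball.diff measurableSet_ball
  set b : ℝ := (1/2:ℝ) ^ (3 + t) with hb
  have hb0 : 0 ≤ b := Real.rpow_nonneg (by norm_num) _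
  have hb1 : b < 1 := Real.rpow_lt_one (by norm_num) (by norm_num) (by linarith)
  -- key per-annulus bound
  have key : ∀ n : ℕ, ∫⁻ p in A n, ENNReal.ofReal (‖p‖ ^ t)
      ≤ (ENNReal.ofReal ((1/2:ℝ)^t) * v) * (ENNReal.ofReal b) ^ n := by
    intro n
    have hrn : (0:ℝ) < (1:ℝ) * (1/2)^(n+1) := by positivity
    have step1 : ∫⁻ p in A n, ENNReal.ofReal (‖p‖ ^ t)
        ≤ ∫⁻ _ in A n, ENNReal.ofReal (((1:ℝ) * (1/2)^(n+1)) ^ t) := by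
      apply setLIntegral_mono measurable_const
      intro p hp
      apply ENNReal.ofReal_le_ofReal
      have h2 := hp.2
      rw [mem_ball_zero_iff, not_lt] at h2
      exact Real.rpow_le_rpow_of_nonpos hrn h2 ht0
    have step2 : (∫⁻ _ in A n, ENNReal.ofReal (((1:ℝ) * (1/2)^(n+1)) ^ t))
        = ENNReal.ofReal (((1:ℝ) * (1/2)^(n+1)) ^ t) * volume (A n) :=
      setLIntegral_const _ _
    have step3 : volume (A n) ≤ ENNReal.ofReal (((1/2:ℝ)^n)^(3:ℕ)) * v := by
      have : volume (A n) ≤ volume (ball (0:E3) ((1:ℝ) * (1/2)^n)) :=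
        measure_mono diff_subset
      rwa [vol_ball_E3 (by positivity), one_mul] at this
    have harith : (((1:ℝ) * (1/2)^(n+1)) ^ t) * (((1/2:ℝ)^n)^(3:ℕ))
        = (1/2:ℝ)^t * b^n := by
      rw [one_mul, ← pow_mul, ← Real.rpow_natCast ((1/2:ℝ)) (n+1),
        ← Real.rpow_natCast ((1/2:ℝ)) (n*3),
        ← Real.rpow_mul (by norm_num : (0:ℝ) ≤ 1/2),
        ← Real.rpow_add (by norm_num : (0:ℝ) < 1/2), hb,
        ← Real.rpow_natCast ((1/2:ℝ)^(3+t)) n,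
        ← Real.rpow_mul (by norm_num : (0:ℝ) ≤ 1/2),
        ← Real.rpow_add (by norm_num : (0:ℝ) < 1/2)]
      congr 1
      push_cast
      ring
    calc ∫⁻ p in A n, ENNReal.ofReal (‖p‖ ^ t)
        ≤ ENNReal.ofReal (((1:ℝ) * (1/2)^(n+1)) ^ t) * volume (A n) := step1.trans_eq step2
      _ ≤ ENNReal.ofReal (((1:ℝ) * (1/2)^(n+1)) ^ t) * (ENNReal.ofReal (((1/2:ℝ)^n)^(3:ℕ)) * v) :=
          mul_le_mul_right step3 _
      _ = (ENNReal.ofReal ((1/2:ℝ)^t) * v) * (ENNReal.ofReal b) ^ n := by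
          rw [← mul_assoc, ← ENNReal.ofReal_mul (by positivity), harith,
            ENNReal.ofReal_mul (by positivity), ← ENNReal.ofReal_pow hb0]
          ring
  -- assemble
  have hzero : ∫⁻ p in ({0} : Set E3), ENNReal.ofReal (‖p‖ ^ t) = 0 :=
    setLIntegral_measure_zero _ _ (measure_singleton 0)
  have hsubset : ball (0:E3) 1 ⊆ (ball (0:E3) 1 \ {0}) ∪ {0} := by
    intro p hp
    by_cases h : p = 0
    · exact Or.inr (by simp [h])
    · exact Or.inl ⟨hp, by simp [h]⟩
  calc ∫⁻ p in ball (0:E3) 1, ENNReal.ofReal (‖p‖ ^ t)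
      ≤ ∫⁻ p in (ball (0:E3) 1 \ {0}) ∪ {0}, ENNReal.ofReal (‖p‖ ^ t) :=
        lintegral_mono_set hsubset
    _ = (∫⁻ p in ball (0:E3) 1 \ {0}, ENNReal.ofReal (‖p‖ ^ t)) + 0 := by
        rw [lintegral_union (measurableSet_singleton 0)
          (Set.disjoint_singleton_right.2 (fun h => h.2 rfl)), hzero]
    _ = ∑' n : ℕ, ∫⁻ p in A n, ENNReal.ofReal (‖p‖ ^ t) := by
        rw [add_zero, ← annuli_cover (ε := 1) one_pos,
          lintegral_iUnion hmeas (annuli_disjoint 1)]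
    _ ≤ ∑' n : ℕ, (ENNReal.ofReal ((1/2:ℝ)^t) * v) * (ENNReal.ofReal b) ^ n :=
        ENNReal.tsum_le_tsum key
    _ = (ENNReal.ofReal ((1/2:ℝ)^t) * v) * (1 - ENNReal.ofReal b)⁻¹ := by
        rw [ENNReal.tsum_mul_left, ENNReal.tsum_geometric]
    _ < ⊤ := by
        apply ENNReal.mul_lt_top
        · exact ENNReal.mul_lt_top ENNReal.ofReal_lt_top hvtop.lt_top
        · rw [ENNReal.inv_lt_top]
          exact tsub_pos_iff_lt.2 (ENNReal.ofReal_lt_one.2 hb1)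

/-- Lemma 4.1 (b), Fourier side: for `3/4 ≤ s₁ < 1`, `s₁ < s₂ < 1` and
`f ∈ L¹(ℝ³) ∩ L²(ℝ³)` with `x ↦ ‖x‖|f(x)|` integrable, the function
`p ↦ 𝓕f(p)/(‖p‖^(2s₁)+‖p‖^(2s₂))` is in `L²(ℝ³)` iff `∫ f = 0`. -/
theorem stmt_2 (s₁ s₂ : ℝ) (hs₁ : 3/4 ≤ s₁) (hs₁' : s₁ < 1)
    (hs₁₂ : s₁ < s₂) (hs₂ : s₂ < 1)
    (f : EuclideanSpace ℝ (Fin 3) → ℂ)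
    (hf1 : Integrable f) (hf2 : MemLp f 2)
    (hxf : Integrable (fun x : EuclideanSpace ℝ (Fin 3) => ‖x‖ * ‖f x‖)) :
    MemLp (fun p : EuclideanSpace ℝ (Fin 3) =>
        𝓕 f p / ((‖p‖ ^ (2*s₁) + ‖p‖ ^ (2*s₂) : ℝ) : ℂ)) 2 ↔
      ∫ x, f x = 0 := by
  have hπ := Real.pi_pos
  set C : ℝ := ∫ x : E3, ‖x‖ * ‖f x‖ with hCdef
  have hC0 : 0 ≤ C := integral_nonneg fun x => by positivity
  have hDnn : ∀ p : E3, (0:ℝ) ≤ ‖p‖ ^ (2*s₁) + ‖p‖ ^ (2*s₂) := fun p => by positivity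
  have hgnorm : ∀ p : E3, ‖𝓕 f p / ((‖p‖ ^ (2*s₁) + ‖p‖ ^ (2*s₂) : ℝ) : ℂ)‖
      = ‖𝓕 f p‖ / (‖p‖ ^ (2*s₁) + ‖p‖ ^ (2*s₂)) := fun p => by
    rw [norm_div, Complex.norm_real, Real.norm_eq_abs, abs_of_nonneg (hDnn p)]
  constructor
  · -- forward direction
    intro hg
    by_contra hc
    have hcnorm : 0 < ‖∫ x : E3, f x‖ := norm_pos_iff.2 hc
    set c : ℝ := ‖∫ x : E3, f x‖ with hcdef
    set ε : ℝ := min 1 (c / (4*π*C + 1)) with hεdef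
    clear_value c ε
    have hcpos : 0 < c := hcnorm
    have hd1 : (0:ℝ) < 4*π*C + 1 := by nlinarith
    have hε : 0 < ε := by
      rw [hεdef]
      exact lt_min one_pos (div_pos hcpos hd1)
    have hε1' : ε ≤ 1 := by rw [hεdef]; exact min_le_left _ _
    have hε1 : ε ≤ 1 := hε1'
    -- pointwise lower bound on the ball
    have hlow : ∀ p ∈ ball (0:E3) ε, p ≠ 0 →
        (c/4)^2 * ‖p‖ ^ (-(4*s₁))
          ≤ ‖𝓕 f p / ((‖p‖ ^ (2*s₁) + ‖p‖ ^ (2*s₂) : ℝ) : ℂ)‖^2 := by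
      intro p hpb hp0
      rw [mem_ball_zero_iff] at hpb
      have hpn : 0 < ‖p‖ := norm_pos_iff.2 hp0
      have hp1 : ‖p‖ ≤ 1 := le_of_lt (lt_of_lt_of_le hpb hε1)
      have hup := fourier_sub_integral_bound f hf1 hxf p
      rw [← hCdef] at hup
      have hnum : c/2 ≤ ‖𝓕 f p‖ := by
        have htri : c ≤ ‖𝓕 f p‖ + ‖𝓕 f p - ∫ x, f x‖ := by
          have h1 : (∫ x : E3, f x) = 𝓕 f p - (𝓕 f p - ∫ x, f x) := by ring
          calc c = ‖𝓕 f p - (𝓕 f p - ∫ x, f x)‖ := by rw [hcdef, ← h1]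
            _ ≤ ‖𝓕 f p‖ + ‖𝓕 f p - ∫ x, f x‖ := norm_sub_le _ _
        have hsmall : 2 * π * C * ‖p‖ ≤ c/2 := by
          have hpe : ‖p‖ ≤ c/(4*π*C + 1) := by
            have := min_le_right (1:ℝ) (c / (4*π*C + 1))
            rw [← hεdef] at this
            exact le_of_lt (lt_of_lt_of_le hpb this)
          have h2 : ‖p‖ * (4*π*C + 1) ≤ c := by
            calc ‖p‖ * (4*π*C + 1) ≤ (c/(4*π*C + 1)) * (4*π*C + 1) :=
                  mul_le_mul_of_nonneg_right hpe hd1.le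
              _ = c := div_mul_cancel₀ c hd1.ne'
          nlinarith [norm_nonneg p]
        nlinarith
      have hden : ‖p‖ ^ (2*s₁) + ‖p‖ ^ (2*s₂) ≤ 2 * ‖p‖^(2*s₁) := by
        have h1 : ‖p‖ ^ (2*s₂) ≤ ‖p‖ ^ (2*s₁) :=
          Real.rpow_le_rpow_of_exponent_ge hpn hp1 (by linarith)
        linarith
      have hXpos : (0:ℝ) < ‖p‖^(2*s₁) := Real.rpow_pos_of_pos hpn _
      have hDpos : (0:ℝ) < ‖p‖ ^ (2*s₁) + ‖p‖ ^ (2*s₂) := by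
        have := Real.rpow_pos_of_pos hpn (2*s₂); linarith
      have hdiv : (c/2) / (2 * ‖p‖^(2*s₁))
          ≤ ‖𝓕 f p‖ / (‖p‖ ^ (2*s₁) + ‖p‖ ^ (2*s₂)) :=
        div_le_div₀ (norm_nonneg _) hnum hDpos hden
      have hx2 : (‖p‖^(2*s₁))^(2:ℕ) = ‖p‖^(4*s₁) := by
        rw [← Real.rpow_natCast (‖p‖^(2*s₁)) 2, ← Real.rpow_mul (norm_nonneg p)]
        norm_num
        ring_nf
      have hXne : (‖p‖^(2*s₁)) ≠ 0 := hXpos.ne'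
      have heq : (c/4)^2 * ‖p‖ ^ (-(4*s₁)) = ((c/2) / (2 * ‖p‖^(2*s₁)))^2 := by
        rw [Real.rpow_neg (norm_nonneg p), ← hx2]
        field_simp
        ring
      calc (c/4)^2 * ‖p‖ ^ (-(4*s₁)) = ((c/2) / (2 * ‖p‖^(2*s₁)))^2 := heq
        _ ≤ (‖𝓕 f p‖ / (‖p‖ ^ (2*s₁) + ‖p‖ ^ (2*s₂)))^2 :=
            pow_le_pow_left₀ (div_nonneg (by linarith) (by positivity)) hdiv 2
        _ = ‖𝓕 f p / ((‖p‖ ^ (2*s₁) + ‖p‖ ^ (2*s₂) : ℝ) : ℂ)‖^2 := by rw [hgnorm p]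
    -- integrability of the square
    have hInt : Integrable (fun p : E3 =>
        ‖𝓕 f p / ((‖p‖ ^ (2*s₁) + ‖p‖ ^ (2*s₂) : ℝ) : ℂ)‖^2) :=
      (memLp_two_iff_integrable_sq_norm hg.1).1 hg
    have hIntOn : IntegrableOn (fun p : E3 =>
        ‖𝓕 f p / ((‖p‖ ^ (2*s₁) + ‖p‖ ^ (2*s₂) : ℝ) : ℂ)‖^2) (ball (0:E3) ε) :=
      hInt.integrableOn
    have hfin := hIntOn.lintegral_lt_top
    have hae : ∀ᵐ p ∂(volume.restrict (ball (0:E3) ε)),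
        ENNReal.ofReal ((c/4)^2 * ‖p‖ ^ (-(4*s₁)))
          ≤ ENNReal.ofReal (‖𝓕 f p / ((‖p‖ ^ (2*s₁) + ‖p‖ ^ (2*s₂) : ℝ) : ℂ)‖^2) := by
      have h1 : ∀ᵐ p : E3, p ∉ ({0} : Set E3) :=
        measure_eq_zero_iff_ae_notMem.1 (measure_singleton 0)
      filter_upwards [ae_restrict_of_ae h1, self_mem_ae_restrict measurableSet_ball]
        with p hp hpball
      exact ENNReal.ofReal_le_ofReal (hlow p hpball (by simpa using hp))
    have hmono := lintegral_mono_ae hae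
    rw [lintegral_rpow_ball_top (by linarith) hε hε1 (pow_pos (by linarith) 2)] at hmono
    exact hfin.ne (top_le_iff.1 hmono)
  · -- reverse direction
    intro h0
    have hcont : Continuous (𝓕 f) :=
      VectorFourier.fourierIntegral_continuous Real.continuous_fourierChar
        (by exact continuous_inner) hf1
    have hmeasD : Measurable (fun p : E3 => ((‖p‖ ^ (2*s₁) + ‖p‖ ^ (2*s₂) : ℝ) : ℂ)) :=
      Complex.measurable_ofReal.comp (by fun_prop)
    have hmeasg : Measurable (fun p : E3 =>
        𝓕 f p / ((‖p‖ ^ (2*s₁) + ‖p‖ ^ (2*s₂) : ℝ) : ℂ)) :=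
      hcont.measurable.div hmeasD
    rw [memLp_two_iff_integrable_sq_norm hmeasg.aestronglyMeasurable]
    set M : ℝ := ∫ x : E3, ‖f x‖ with hMdef
    have hM0 : 0 ≤ M := integral_nonneg fun x => norm_nonneg _
    have hup : ∀ p : E3, ‖𝓕 f p‖ ≤ M := fun p =>
      VectorFourier.norm_fourierIntegral_le_integral_norm _ _ _ _ _
    set h₁ : E3 → ℝ :=
      (ball (0:E3) 1).indicator (fun p => (2*π*C)^2 * ‖p‖ ^ (2 - 4*s₁)) with hh₁
    set h₂ : E3 → ℝ := fun p => 16*M^2 * (1 + ‖p‖) ^ (-(4*s₂)) with hh₂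
    have hio : IntegrableOn (fun p : E3 => (2*π*C)^2 * ‖p‖ ^ (2 - 4*s₁)) (ball (0:E3) 1) :=
      (integrableOn_rpow_ball (t := 2-4*s₁) (by linarith) (by linarith)).const_mul ((2*π*C)^2)
    have hInt1 : Integrable h₁ := hio.integrable_indicator measurableSet_ball
    have hInt2 : Integrable h₂ := by
      apply Integrable.const_mul
      apply integrable_one_add_norm (E := E3)
      rw [finrank_euclideanSpace_fin]
      push_cast
      linarith
    have hh₁nn : ∀ p, 0 ≤ h₁ p := fun p =>
      Set.indicator_nonneg (fun q _ => by positivity) p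
    have hh₂nn : ∀ p, 0 ≤ h₂ p := fun p => by
      simp only [hh₂]
      have : (0:ℝ) ≤ (1 + ‖p‖) ^ (-(4*s₂)) := Real.rpow_nonneg (by positivity) _
      nlinarith
    apply Integrable.mono' (hInt1.add hInt2)
      ((hmeasg.norm.pow_const 2).aestronglyMeasurable)
    refine Filter.Eventually.of_forall fun p => ?_
    rw [Real.norm_eq_abs, abs_of_nonneg (by positivity)]
    by_cases hp1 : ‖p‖ < 1
    · by_cases hp0 : p = 0
      · subst hp0
        have hD0 : (‖(0:E3)‖ ^ (2*s₁) + ‖(0:E3)‖ ^ (2*s₂) : ℝ) = 0 := by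
          rw [norm_zero, Real.zero_rpow (by nlinarith), Real.zero_rpow (by nlinarith)]
          norm_num
        rw [hD0]
        simp only [Complex.ofReal_zero, div_zero, norm_zero]
        have := hh₁nn 0
        have := hh₂nn 0
        norm_num
        linarith
      · have hpn : 0 < ‖p‖ := norm_pos_iff.2 hp0
        have hnum : ‖𝓕 f p‖ ≤ 2*π*C*‖p‖ := by
          have := fourier_sub_integral_bound f hf1 hxf p
          rw [h0, sub_zero, ← hCdef] at this
          linarith [this]
        have hXpos : (0:ℝ) < ‖p‖^(2*s₁) := Real.rpow_pos_of_pos hpn _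
        have hden : ‖p‖^(2*s₁) ≤ ‖p‖ ^ (2*s₁) + ‖p‖ ^ (2*s₂) :=
          le_add_of_nonneg_right (Real.rpow_nonneg (norm_nonneg p) _)
        have hnum0 : (0:ℝ) ≤ 2*π*C*‖p‖ :=
          mul_nonneg (mul_nonneg (by positivity) hC0) (norm_nonneg p)
        have hdiv : ‖𝓕 f p‖ / (‖p‖ ^ (2*s₁) + ‖p‖ ^ (2*s₂))
            ≤ (2*π*C*‖p‖) / (‖p‖^(2*s₁)) :=
          div_le_div₀ hnum0 hnum hXpos hden
        have hx2 : (‖p‖^(2*s₁))^(2:ℕ) = ‖p‖^(4*s₁) := by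
          rw [← Real.rpow_natCast (‖p‖^(2*s₁)) 2, ← Real.rpow_mul (norm_nonneg p)]
          norm_num; ring_nf
        have he2 : (‖p‖:ℝ)^(2:ℕ) = ‖p‖^((2:ℝ)) := (Real.rpow_natCast ‖p‖ 2).symm
        have heq : ((2*π*C*‖p‖) / (‖p‖^(2*s₁)))^2 = (2*π*C)^2 * ‖p‖ ^ (2 - 4*s₁) := by
          rw [div_pow, mul_pow, hx2, he2, mul_div_assoc, ← Real.rpow_sub hpn]
        have hind : h₁ p = (2*π*C)^2 * ‖p‖ ^ (2 - 4*s₁) := by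
          rw [hh₁, Set.indicator_of_mem (mem_ball_zero_iff.2 hp1)]
        calc ‖𝓕 f p / ((‖p‖ ^ (2*s₁) + ‖p‖ ^ (2*s₂) : ℝ) : ℂ)‖^2
            ≤ ((2*π*C*‖p‖) / (‖p‖^(2*s₁)))^2 := by
              rw [hgnorm p]
              exact pow_le_pow_left₀ (div_nonneg (norm_nonneg _) (hDnn p)) hdiv 2
          _ = h₁ p := by rw [heq, hind]
          _ ≤ h₁ p + h₂ p := le_add_of_nonneg_right (hh₂nn p)
    · push_neg at hp1
      have hpn : 0 < ‖p‖ := lt_of_lt_of_le one_pos hp1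
      have hXpos : (0:ℝ) < ‖p‖^(2*s₂) := Real.rpow_pos_of_pos hpn _
      have hden : ‖p‖^(2*s₂) ≤ ‖p‖ ^ (2*s₁) + ‖p‖ ^ (2*s₂) :=
        le_add_of_nonneg_left (Real.rpow_nonneg (norm_nonneg p) _)
      have hdiv : ‖𝓕 f p‖ / (‖p‖ ^ (2*s₁) + ‖p‖ ^ (2*s₂)) ≤ M / (‖p‖^(2*s₂)) :=
        div_le_div₀ hM0 (hup p) hXpos hden
      have hx2 : (‖p‖^(2*s₂))^(2:ℕ) = ‖p‖^(4*s₂) := by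
        rw [← Real.rpow_natCast (‖p‖^(2*s₂)) 2, ← Real.rpow_mul (norm_nonneg p)]
        norm_num; ring_nf
      have hA : (0:ℝ) < ‖p‖^(4*s₂) := Real.rpow_pos_of_pos hpn _
      have hB : (0:ℝ) < (1+‖p‖)^(4*s₂) := Real.rpow_pos_of_pos (by positivity) _
      have h16 : (1+‖p‖)^(4*s₂) ≤ 16 * ‖p‖^(4*s₂) := by
        have hkey : (1+‖p‖)^(4*s₂) ≤ (2*‖p‖)^(4*s₂) :=
          Real.rpow_le_rpow (by positivity) (by linarith) (by linarith)
        have hmul : (2*‖p‖:ℝ)^(4*s₂) = 2^(4*s₂) * ‖p‖^(4*s₂) :=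
          Real.mul_rpow (by norm_num) (norm_nonneg p)
        have h2pow : (2:ℝ)^(4*s₂) ≤ 16 := by
          have : (2:ℝ)^(4*s₂) ≤ 2^((4:ℝ)) :=
            Real.rpow_le_rpow_of_exponent_le one_le_two (by linarith)
          have h4 : (2:ℝ)^((4:ℝ)) = 16 := by
            rw [show ((4:ℝ)) = ((4:ℕ):ℝ) by norm_num, Real.rpow_natCast]; norm_num
          linarith
        nlinarith [Real.rpow_nonneg (norm_nonneg p) (4*s₂)]
      have hinv : (‖p‖^(4*s₂))⁻¹ ≤ 16 * ((1+‖p‖)^(4*s₂))⁻¹ := by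
        have hd : (1:ℝ)/(‖p‖^(4*s₂)) ≤ 16/((1+‖p‖)^(4*s₂)) := by
          rw [div_le_div_iff₀ hA hB]; nlinarith
        simpa [one_div, div_eq_mul_inv] using hd
      have hind0 : h₁ p = 0 := by
        rw [hh₁, Set.indicator_of_notMem]
        rw [mem_ball_zero_iff]
        exact not_lt.2 hp1
      calc ‖𝓕 f p / ((‖p‖ ^ (2*s₁) + ‖p‖ ^ (2*s₂) : ℝ) : ℂ)‖^2
          ≤ (M / (‖p‖^(2*s₂)))^2 := by
            rw [hgnorm p]
            exact pow_le_pow_left₀ (div_nonneg (norm_nonneg _) (hDnn p)) hdiv 2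
        _ = M^2 * (‖p‖^(4*s₂))⁻¹ := by rw [div_pow, hx2, div_eq_mul_inv]
        _ ≤ M^2 * (16 * ((1+‖p‖)^(4*s₂))⁻¹) :=
            mul_le_mul_of_nonneg_left hinv (sq_nonneg M)
        _ = h₂ p := by
            simp only [hh₂]
            rw [Real.rpow_neg (by positivity : (0:ℝ) ≤ 1 + ‖p‖)]
            ring
        _ ≤ h₁ p + h₂ p := by rw [hind0]; simp
end

section
/- Let 3/4 ≤ s₁ < 1 and s₁ < s₂ < 1, and let c ∈ ℂ. If the function p ↦ c/(‖p‖^(2s₁) + ‖p‖^(2s₂)), restricted to the unit ball {p ∈ ℝ³ : ‖p‖ ≤ 1}, is square-integrable with respect to Lebesgue measure on ℝ³, then c = 0. -/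
open MeasureTheory

open Metric ENNReal

lemma key_divergence {t : ℝ} (ht : 3 ≤ t) :
    ∫⁻ p in closedBall (0 : EuclideanSpace ℝ (Fin 3)) 1, ENNReal.ofReal (‖p‖ ^ (-t)) = ∞ := by
  set V : ℝ≥0∞ := volume (ball (0 : EuclideanSpace ℝ (Fin 3)) 1) with hV
  have hV0 : V ≠ 0 := (measure_ball_pos _ _ one_pos).ne'
  have hVtop : V ≠ ∞ := measure_ball_lt_top.ne
  set r : ℕ → ℝ := fun k => (1/2 : ℝ) ^ k with hr
  have hrpos : ∀ k, 0 < r k := fun k => pow_pos (by norm_num) k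
  have hrle1 : ∀ k, r k ≤ 1 := fun k => pow_le_one₀ (by norm_num) (by norm_num)
  set A : ℕ → Set (EuclideanSpace ℝ (Fin 3)) := fun k => closedBall (0 : EuclideanSpace ℝ (Fin 3)) (r k) \ closedBall 0 (r (k+1)) with hA
  have hAmeas : ∀ k, MeasurableSet (A k) :=
    fun k => measurableSet_closedBall.diff measurableSet_closedBall
  have hranti : ∀ j k, j < k → r k ≤ r (j+1) := by
    intro j k hjk
    exact pow_le_pow_of_le_one (by norm_num) (by norm_num) hjk
  have hdisj : Pairwise (Function.onFun Disjoint A) := by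
    intro j k hjk
    wlog hlt : j < k generalizing j k
    · exact (this hjk.symm (by omega)).symm
    refine Set.disjoint_left.mpr fun x hxj hxk => ?_
    exact hxj.2 (closedBall_subset_closedBall (hranti j k hlt) hxk.1)
  have hfinrank : Module.finrank ℝ (EuclideanSpace ℝ (Fin 3)) = 3 := by
    simp [finrank_euclideanSpace]
  have hvolA : ∀ k, volume (A k) =
      ENNReal.ofReal (r k ^ 3 - r (k+1) ^ 3) * V := by
    intro k
    rw [hA]
    rw [measure_diff (closedBall_subset_closedBall (by
          exact pow_le_pow_of_le_one (by norm_num) (by norm_num) (Nat.le_succ k)))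
        measurableSet_closedBall.nullMeasurableSet measure_closedBall_lt_top.ne]
    rw [Measure.addHaar_closedBall _ _ (hrpos k).le,
        Measure.addHaar_closedBall _ _ (hrpos (k+1)).le, hfinrank]
    rw [← ENNReal.sub_mul (fun _ _ => hVtop)]
    congr 1
    rw [ENNReal.ofReal_sub _ (by positivity)]
  have hUsub : (⋃ k, A k) ⊆ closedBall (0 : EuclideanSpace ℝ (Fin 3)) 1 := by
    refine Set.iUnion_subset fun k => ?_
    exact (Set.diff_subset).trans (closedBall_subset_closedBall (hrle1 k))
  have hterm : ∀ k, ENNReal.ofReal (7/8 : ℝ) * V ≤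
      ∫⁻ p in A k, ENNReal.ofReal (‖p‖ ^ (-t)) := by
    intro k
    have hlb : ∀ p ∈ A k, ENNReal.ofReal (r k ^ (-t)) ≤ ENNReal.ofReal (‖p‖ ^ (-t)) := by
      intro p hp
      have hpn : r (k+1) < ‖p‖ := by
        have := hp.2
        simpa [mem_closedBall, dist_zero_right, not_le] using this
      have hple : ‖p‖ ≤ r k := by
        have := hp.1
        simpa [mem_closedBall, dist_zero_right] using this
      have hp0 : 0 < ‖p‖ := (hrpos (k+1)).trans hpn
      apply ENNReal.ofReal_le_ofReal
      rw [Real.rpow_neg (hrpos k).le, Real.rpow_neg hp0.le]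
      apply inv_anti₀ (Real.rpow_pos_of_pos hp0 t)
      exact Real.rpow_le_rpow hp0.le hple (by linarith)
    calc ENNReal.ofReal (7/8 : ℝ) * V
        ≤ ENNReal.ofReal (r k ^ (-t)) * volume (A k) := by
          rw [hvolA k, ← mul_assoc, ← ENNReal.ofReal_mul (by positivity)]
          apply mul_le_mul_left (ENNReal.ofReal_le_ofReal ?_)
          have h1 : r (k+1) = r k / 2 := by rw [hr]; ring
          have h2 : r k ^ 3 - r (k+1) ^ 3 = 7/8 * r k ^ 3 := by rw [h1]; ring
          rw [h2]
          have h3 : r k ^ (-t) * (7/8 * r k ^ 3) = 7/8 * (r k ^ (-t) * r k ^ (3:ℝ)) := by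
            rw [show ((3:ℝ)) = ((3:ℕ):ℝ) by norm_num, Real.rpow_natCast]; ring
          rw [h3, ← Real.rpow_add (hrpos k)]
          have h4 : (1:ℝ) ≤ r k ^ (-t + 3) :=
            Real.one_le_rpow_of_pos_of_le_one_of_nonpos (hrpos k) (hrle1 k) (by linarith)
          linarith
      _ ≤ ∫⁻ p in A k, ENNReal.ofReal (‖p‖ ^ (-t)) := by
          rw [← setLIntegral_const]
          exact setLIntegral_mono' (hAmeas k) hlb
  refine top_unique ?_
  calc (∞ : ℝ≥0∞) = ∑' _ : ℕ, ENNReal.ofReal (7/8 : ℝ) * V := by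
        rw [ENNReal.tsum_const_eq_top_of_ne_zero]
        exact mul_ne_zero (by simp) hV0
    _ ≤ ∑' k, ∫⁻ p in A k, ENNReal.ofReal (‖p‖ ^ (-t)) := ENNReal.tsum_le_tsum hterm
    _ = ∫⁻ p in ⋃ k, A k, ENNReal.ofReal (‖p‖ ^ (-t)) :=
        (lintegral_iUnion hAmeas hdisj _).symm
    _ ≤ _ := lintegral_mono_set hUsub

/-- For `3/4 ≤ s₁ < 1`, `s₁ < s₂ < 1`, if `p ↦ c/(‖p‖^{2s₁}+‖p‖^{2s₂})` is
square-integrable on the unit ball of `ℝ³`, then `c = 0`. -/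
theorem stmt_11 (s₁ s₂ : ℝ) (hs₁ : 3/4 ≤ s₁) (hs₁' : s₁ < 1)
    (hs₁₂ : s₁ < s₂) (hs₂ : s₂ < 1) (c : ℂ)
    (h : MemLp (fun p : EuclideanSpace ℝ (Fin 3) =>
        c / ((‖p‖ ^ (2*s₁) + ‖p‖ ^ (2*s₂) : ℝ) : ℂ)) 2
      (volume.restrict (Metric.closedBall (0 : EuclideanSpace ℝ (Fin 3)) 1))) :
    c = 0 := by
  by_contra hc
  set f := fun p : EuclideanSpace ℝ (Fin 3) =>
    c / ((‖p‖ ^ (2*s₁) + ‖p‖ ^ (2*s₂) : ℝ) : ℂ) with hf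
  set ν := volume.restrict (Metric.closedBall (0 : EuclideanSpace ℝ (Fin 3)) 1) with hν
  have hint : Integrable (fun p => ‖f p‖ ^ (2:ℝ)) ν := by
    have := h.integrable_norm_rpow (by norm_num) (by norm_num)
    simpa using this
  have hfin : ∫⁻ p, ENNReal.ofReal (‖f p‖ ^ (2:ℝ)) ∂ν < ∞ := by
    rw [← hasFiniteIntegral_iff_ofReal (ae_of_all _ fun p => by positivity)]
    exact hint.2
  have hae : ∀ᵐ p ∂ν, ENNReal.ofReal ((‖c‖^2/4) * ‖p‖ ^ (-(4*s₁)))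
      ≤ ENNReal.ofReal (‖f p‖ ^ (2:ℝ)) := by
    have h0 : ∀ᵐ p ∂ν, p ≠ (0 : EuclideanSpace ℝ (Fin 3)) := by
      refine ae_restrict_of_ae ?_
      rw [ae_iff]
      simp
    have hB : ∀ᵐ p ∂ν, p ∈ Metric.closedBall (0 : EuclideanSpace ℝ (Fin 3)) 1 :=
      ae_restrict_mem measurableSet_closedBall
    filter_upwards [h0, hB] with p hp0 hpB
    apply ENNReal.ofReal_le_ofReal
    have hn : 0 < ‖p‖ := norm_pos_iff.mpr hp0
    have hp1 : ‖p‖ ≤ 1 := by simpa [mem_closedBall, dist_zero_right] using hpB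
    set a := ‖p‖ ^ (2*s₁) with ha'
    have ha : 0 < a := Real.rpow_pos_of_pos hn _
    have hb : 0 < ‖p‖ ^ (2*s₂) := Real.rpow_pos_of_pos hn _
    have hle : ‖p‖ ^ (2*s₂) ≤ a :=
      Real.rpow_le_rpow_of_exponent_ge hn hp1 (by linarith)
    have hD : 0 < a + ‖p‖ ^ (2*s₂) := by linarith
    have hnormf : ‖f p‖ = ‖c‖ / (a + ‖p‖ ^ (2*s₂)) := by
      rw [hf]
      rw [norm_div, Complex.norm_real, Real.norm_of_nonneg hD.le]
    have hkey : ‖p‖ ^ (-(4*s₁)) = (a^2)⁻¹ := by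
      rw [ha', ← Real.rpow_natCast (‖p‖ ^ (2*s₁)) 2, ← Real.rpow_mul hn.le,
        ← Real.rpow_neg hn.le]
      congr 1
      push_cast
      ring
    rw [hnormf, hkey, Real.rpow_two, div_pow]
    calc ‖c‖^2/4 * (a^2)⁻¹ = ‖c‖^2 / (2*a)^2 := by ring
      _ ≤ ‖c‖^2 / (a + ‖p‖ ^ (2*s₂))^2 := by
          apply div_le_div_of_nonneg_left (by positivity) (by positivity)
          nlinarith
  have hle2 : ∫⁻ p, ENNReal.ofReal ((‖c‖^2/4) * ‖p‖ ^ (-(4*s₁))) ∂ν < ∞ :=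
    (lintegral_mono_ae hae).trans_lt hfin
  have heq : ∫⁻ p, ENNReal.ofReal ((‖c‖^2/4) * ‖p‖ ^ (-(4*s₁))) ∂ν
      = ENNReal.ofReal (‖c‖^2/4) * ∫⁻ p, ENNReal.ofReal (‖p‖ ^ (-(4*s₁))) ∂ν := by
    simp_rw [ENNReal.ofReal_mul (by positivity : (0:ℝ) ≤ ‖c‖^2/4)]
    exact lintegral_const_mul' _ _ ENNReal.ofReal_ne_top
  rw [heq, hν, key_divergence (by linarith), ENNReal.mul_top] at hle2
  · exact (lt_irrefl _ hle2).elim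
  · simp only [ne_eq, ENNReal.ofReal_eq_zero, not_le]
    have : 0 < ‖c‖ := norm_pos_iff.mpr hc
    positivity
end

section
/- Let N ≥ 1, let r > 0, let M ≥ 0, and let g : ℝᴺ → ℝ be twice continuously differentiable with g(0) = 0, with vanishing derivative at the origin (fderiv g at 0 equals 0), and with ‖D²g(z)‖ ≤ M for all z in the closed ball of radius r centered at the origin. Let w : ℝ³ → ℝᴺ be a measurable function belonging to L²(ℝ³, ℝᴺ) such that ‖w(x)‖ ≤ r for almost every x ∈ ℝ³. Then the composition x ↦ g(w(x)) is integrable on ℝ³ and ∫_{ℝ³} |g(w(x))| dx ≤ M·‖w‖_{L²}². -/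
open MeasureTheory

lemma pointwise_quad_bound (N : ℕ) (r M : ℝ) (hM : 0 ≤ M)
    (g : EuclideanSpace ℝ (Fin N) → ℝ)
    (hg : ContDiff ℝ 2 g) (hg0 : g 0 = 0) (hg0' : fderiv ℝ g 0 = 0)
    (hD2 : ∀ z ∈ Metric.closedBall (0 : EuclideanSpace ℝ (Fin N)) r,
      ‖iteratedFDeriv ℝ 2 g z‖ ≤ M)
    (z : EuclideanSpace ℝ (Fin N)) (hz : ‖z‖ ≤ r) : |g z| ≤ M * ‖z‖ ^ 2 := by
  have hgd : Differentiable ℝ g := hg.differentiable (by norm_num)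
  have hfd : Differentiable ℝ (fderiv ℝ g) :=
    (hg.fderiv_right (m := 1) (by norm_num)).differentiable (by norm_num)
  -- fderiv bound on closed ball of radius ‖z‖
  have hlip : ∀ y ∈ Metric.closedBall (0 : EuclideanSpace ℝ (Fin N)) ‖z‖,
      ‖fderiv ℝ g y‖ ≤ M * ‖z‖ := by
    intro y hy
    have hy' : ‖y‖ ≤ ‖z‖ := by simpa using hy
    have hsub : Metric.closedBall (0 : EuclideanSpace ℝ (Fin N)) ‖z‖ ⊆
        Metric.closedBall 0 r := Metric.closedBall_subset_closedBall hz
    have key := (convex_closedBall (0 : EuclideanSpace ℝ (Fin N)) ‖z‖).norm_image_sub_le_of_norm_fderiv_le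
      (f := fderiv ℝ g) (fun x _ => hfd x)
      (fun x hx => by
        have h2 : ‖fderiv ℝ (fderiv ℝ g) x‖ = ‖iteratedFDeriv ℝ 2 g x‖ := by
          rw [← norm_iteratedFDeriv_fderiv (n := 1)
            , ← norm_iteratedFDeriv_fderiv (n := 0), norm_iteratedFDeriv_zero]
        rw [h2]; exact hD2 x (hsub hx))
      (Metric.mem_closedBall_self (norm_nonneg z)) hy
    have : ‖fderiv ℝ g y - fderiv ℝ g 0‖ ≤ M * ‖y - 0‖ := key
    rw [hg0', sub_zero, sub_zero] at this
    calc ‖fderiv ℝ g y‖ ≤ M * ‖y‖ := this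
      _ ≤ M * ‖z‖ := by gcongr
  have key := (convex_closedBall (0 : EuclideanSpace ℝ (Fin N)) ‖z‖).norm_image_sub_le_of_norm_fderiv_le
    (f := g) (fun x _ => hgd x) hlip
    (Metric.mem_closedBall_self (norm_nonneg z)) (mem_closedBall_zero_iff.mpr le_rfl)
  rw [hg0, sub_zero, sub_zero] at key
  calc |g z| = ‖g z‖ := rfl
    _ ≤ M * ‖z‖ * ‖z‖ := key
    _ = M * ‖z‖ ^ 2 := by ring

/-- The `L¹` bound for the nonlinear term: if `g ∈ C²(ℝᴺ)` with `g(0) = 0`,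
`∇g(0) = 0` and `‖D²g‖ ≤ M` on the closed ball of radius `r`, and
`w ∈ L²(ℝ³, ℝᴺ)` with `‖w(x)‖ ≤ r` a.e., then `x ↦ g(w(x))` is integrable and
`∫ |g(w(x))| dx ≤ M ∫ ‖w(x)‖² dx`. -/
theorem stmt_13 (N : ℕ) (hN : 1 ≤ N) (r M : ℝ) (hr : 0 < r) (hM : 0 ≤ M)
    (g : EuclideanSpace ℝ (Fin N) → ℝ)
    (hg : ContDiff ℝ 2 g) (hg0 : g 0 = 0) (hg0' : fderiv ℝ g 0 = 0)
    (hD2 : ∀ z ∈ Metric.closedBall (0 : EuclideanSpace ℝ (Fin N)) r,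
      ‖iteratedFDeriv ℝ 2 g z‖ ≤ M)
    (w : EuclideanSpace ℝ (Fin 3) → EuclideanSpace ℝ (Fin N))
    (hwm : Measurable w) (hw2 : MemLp w 2)
    (hwr : ∀ᵐ x : EuclideanSpace ℝ (Fin 3), ‖w x‖ ≤ r) :
    Integrable (fun x : EuclideanSpace ℝ (Fin 3) => g (w x)) ∧
    ∫ x : EuclideanSpace ℝ (Fin 3), |g (w x)| ≤ M * ∫ x, ‖w x‖ ^ 2 := by
  have hbound : ∀ᵐ x : EuclideanSpace ℝ (Fin 3), |g (w x)| ≤ M * ‖w x‖ ^ 2 :=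
    hwr.mono fun x hx => pointwise_quad_bound N r M hM g hg hg0 hg0' hD2 (w x) hx
  have hnorm2 : Integrable (fun x : EuclideanSpace ℝ (Fin 3) => ‖w x‖ ^ 2) := by
    have := hw2.integrable_norm_rpow (by norm_num) (by norm_num)
    simpa [ENNReal.toReal_ofNat, Real.rpow_natCast] using this
  have hmeas : AEStronglyMeasurable (fun x : EuclideanSpace ℝ (Fin 3) => g (w x)) volume :=
    ((hg.continuous.measurable).comp hwm).aestronglyMeasurable
  have hint : Integrable (fun x : EuclideanSpace ℝ (Fin 3) => g (w x)) := by
    refine Integrable.mono' (hnorm2.const_mul M) hmeas ?_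
    exact hbound.mono fun x hx => by simpa [Real.norm_eq_abs] using hx
  refine ⟨hint, ?_⟩
  calc ∫ x : EuclideanSpace ℝ (Fin 3), |g (w x)|
      ≤ ∫ x, M * ‖w x‖ ^ 2 := integral_mono_ae hint.abs (hnorm2.const_mul M) hbound
    _ = M * ∫ x, ‖w x‖ ^ 2 := integral_const_mul M _
end
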